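/- Let μ be a probability measure on ℝ^d × ℝ, let (X'₁,Y'₁),…,(X'_n,Y'_n),(X,Y) be i.i.d. with law μ, let G ⊆ [0,1] be a finite set with 0 ∈ G and |G| = K+1 (K ≥ 1), and for each τ ∈ G let C_τ ⊆ ℝ^d × ℝ be a fixed measurable set with C₀ = ℝ^d × ℝ. Let α ∈ (0,1) and ε ∈ (0,α). Let p̂(τ) = (1/n)·#{ i ≤ n : (X'ᵢ,Y'ᵢ) ∈ C_τ } and let τ̂ = max{ τ ∈ G : p̂(τ) ≥ 1−(α−ε) }. If n ≥ −2·log( ε/(2K(1−α+ε/2)) ) / ε², then P( (X,Y) ∈ C_{τ̂} ) ≥ 1 − α, where the probability is over both the n holdout samples (which determine τ̂) and the independent pair (X,Y). -/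

import Mathlib

open MeasureTheory ProbabilityTheory


/-- Hoeffding's lemma for a Bernoulli(p) variable, at `t ≥ 0`. -/
lemma bernoulli_mgf_le (p t : ℝ) (hp0 : 0 ≤ p) (hp1 : p ≤ 1) (ht : 0 ≤ t) :
    Real.exp (-(t * p)) * (1 - p + p * Real.exp t) ≤ Real.exp (t ^ 2 / 8) := by
  have hv : ∀ s : ℝ, 0 < 1 - p + p * Real.exp s := by
    intro s
    rcases eq_or_lt_of_le hp0 with h | h
    · simp [← h]
    · nlinarith [Real.exp_pos s]
  set f : ℝ → ℝ := fun s => Real.log (1 - p + p * Real.exp s) - p * s - s ^ 2 / 8 with hf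
  set g : ℝ → ℝ := fun s => p * Real.exp s / (1 - p + p * Real.exp s) - p - s / 4 with hg
  have hfd : ∀ s : ℝ, HasDerivAt f (g s) s := by
    intro s
    have h1 : HasDerivAt (fun s => 1 - p + p * Real.exp s) (p * Real.exp s) s :=
      ((Real.hasDerivAt_exp s).const_mul p).const_add (1 - p)
    have h2 : HasDerivAt (fun s => Real.log (1 - p + p * Real.exp s))
        (p * Real.exp s / (1 - p + p * Real.exp s)) s := h1.log (hv s).ne'
    have h3 : HasDerivAt (fun s : ℝ => p * s) p s := (hasDerivAt_id s).const_mul p |>.congr_deriv (by ring)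
    have h4 : HasDerivAt (fun s : ℝ => s ^ 2 / 8) (s / 4) s := by
      simpa using ((hasDerivAt_pow 2 s).div_const 8).congr_deriv (by ring)
    exact (h2.sub h3).sub h4
  have hgd : ∀ s : ℝ, ∃ d, HasDerivAt g d s ∧ d ≤ 0 := by
    intro s
    set a : ℝ := p * Real.exp s with ha
    set w : ℝ := 1 - p + p * Real.exp s with hw
    have hw0 : 0 < w := hv s
    have h1 : HasDerivAt (fun s => 1 - p + p * Real.exp s) a s :=
      ((Real.hasDerivAt_exp s).const_mul p).const_add (1 - p)
    have h2 : HasDerivAt (fun s => p * Real.exp s) a s := (Real.hasDerivAt_exp s).const_mul p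
    have hdiv : HasDerivAt (fun s => p * Real.exp s / (1 - p + p * Real.exp s))
        ((a * w - a * a) / w ^ 2) s := by
      exact h2.div h1 hw0.ne'
    have h5 : HasDerivAt (fun s : ℝ => s / 4) (1 / 4) s := (hasDerivAt_id s).div_const 4
    refine ⟨(a * w - a * a) / w ^ 2 - 0 - 1 / 4, ?_, ?_⟩
    · exact (hdiv.sub (hasDerivAt_const s p)).sub h5
    · have haw : a ≤ w := by
        have := Real.exp_pos s; nlinarith
    -- (a*w - a*a)/w² ≤ 1/4 since 4a(w-a) ≤ w²
      have ha0 : 0 ≤ a := mul_nonneg hp0 (Real.exp_pos s).le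
      have : (a * w - a * a) / w ^ 2 ≤ 1 / 4 := by
        rw [div_le_iff₀ (by positivity)]
        nlinarith [sq_nonneg (w - 2 * a)]
      linarith
  have hgdiff : Differentiable ℝ g := fun s => ((hgd s).choose_spec.1).differentiableAt
  have hganti : Antitone g := by
    refine antitone_of_deriv_nonpos hgdiff fun s => ?_
    obtain ⟨d, hd, hd0⟩ := hgd s
    rw [hd.deriv]; exact hd0
  have hg0 : g 0 = 0 := by simp [hg]
  have hgle : ∀ s : ℝ, 0 ≤ s → g s ≤ 0 := fun s hs => hg0 ▸ hganti hs
  have hfanti : AntitoneOn f (Set.Ici 0) := by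
    refine antitoneOn_of_deriv_nonpos (convex_Ici 0)
      (fun s _ => (hfd s).differentiableAt.continuousAt.continuousWithinAt)
      (fun s _ => (hfd s).differentiableAt.differentiableWithinAt) fun s hs => ?_
    rw [(hfd s).deriv]
    exact hgle s (le_of_lt (by simpa using hs))
  have hf0 : f 0 = 0 := by simp [hf]
  have hfle : f t ≤ 0 := by
    have := hfanti (Set.self_mem_Ici) (Set.mem_Ici.2 ht) ht
    simpa [hf0] using this
  have hlog : Real.log (1 - p + p * Real.exp t) ≤ p * t + t ^ 2 / 8 := by
    simp only [hf] at hfle; linarith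
  have hle : 1 - p + p * Real.exp t ≤ Real.exp (p * t + t ^ 2 / 8) :=
    (Real.log_le_iff_le_exp (hv t)).1 hlog
  calc Real.exp (-(t * p)) * (1 - p + p * Real.exp t)
      ≤ Real.exp (-(t * p)) * Real.exp (p * t + t ^ 2 / 8) := by
        exact mul_le_mul_of_nonneg_left hle (Real.exp_pos _).le
    _ = Real.exp (t ^ 2 / 8) := by rw [← Real.exp_add]; ring_nf

lemma chernoff_bound {Ω E ι : Type*} [MeasurableSpace Ω] [MeasurableSpace E]
    (P : Measure Ω) [IsProbabilityMeasure P] (X : ι → Ω → E)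
    (hmeas : ∀ i, Measurable (X i))
    (hindep : iIndepFun X P)
    (s : Finset ι) {n : ℕ} (hcard : s.card = n) (hn : 1 ≤ n)
    (C : Set E) (hC : MeasurableSet C) (p : ℝ)
    (hp : ∀ i ∈ s, (P (X i ⁻¹' C)).toReal = p)
    (δ : ℝ) (hδ : 0 < δ) :
    (P {ω | (n : ℝ) * (p + δ) ≤ ∑ i ∈ s, C.indicator (fun _ => (1:ℝ)) (X i ω)}).toReal
      ≤ Real.exp (-2 * n * δ ^ 2) := by
  classical
  set Y : ι → Ω → ℝ := fun i ω => C.indicator (fun _ => (1:ℝ)) (X i ω) with hY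
  have hYmeas : ∀ i, Measurable (Y i) := fun i =>
    (measurable_const.indicator hC).comp (hmeas i)
  have hYindep : iIndepFun Y P :=
    hindep.comp (fun _ => C.indicator fun _ => (1:ℝ)) fun _ => measurable_const.indicator hC
  obtain ⟨i₀, hi₀⟩ : s.Nonempty := Finset.card_pos.1 (by omega)
  have hp0 : 0 ≤ p := (hp i₀ hi₀) ▸ ENNReal.toReal_nonneg
  have hp1 : p ≤ 1 := by
    rw [← hp i₀ hi₀]
    exact ENNReal.toReal_le_of_le_ofReal one_pos.le (by simpa using prob_le_one)
  set t : ℝ := 4 * δ with htdef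
  have ht : 0 ≤ t := by positivity
  have hexp_eq : ∀ i, (fun ω => Real.exp (t * Y i ω)) = fun ω =>
      (X i ⁻¹' C).indicator (fun _ => Real.exp t) ω + (X i ⁻¹' C)ᶜ.indicator (fun _ => (1:ℝ)) ω := by
    intro i; funext ω
    by_cases h : X i ω ∈ C <;> simp [hY, Set.indicator_apply, h]
  have h_int : ∀ i ∈ s, Integrable (fun ω => Real.exp (t * Y i ω)) P := by
    intro i _
    rw [hexp_eq i]
    exact ((integrable_const _).indicator ((hmeas i) hC)).add
      ((integrable_const _).indicator ((hmeas i) hC).compl)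
  have hmgf : ∀ i ∈ s, mgf (Y i) P t = 1 - p + p * Real.exp t := by
    intro i hi
    have hcompl : (P (X i ⁻¹' C)ᶜ).toReal = 1 - p := by
      rw [measure_compl ((hmeas i) hC) (measure_ne_top _ _), measure_univ,
        ENNReal.toReal_sub_of_le prob_le_one (by simp), hp i hi]
      simp
    rw [mgf, hexp_eq i, integral_add ((integrable_const _).indicator ((hmeas i) hC))
      ((integrable_const _).indicator ((hmeas i) hC).compl),
      integral_indicator_const _ ((hmeas i) hC), integral_indicator_const _ ((hmeas i) hC).compl,
      measureReal_def, measureReal_def, hp i hi, hcompl]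
    simp [smul_eq_mul]; ring
  have hmgfS : mgf (∑ i ∈ s, Y i) P t = (1 - p + p * Real.exp t) ^ n := by
    rw [hYindep.mgf_sum hYmeas s, Finset.prod_congr rfl hmgf, Finset.prod_const, hcard]
  have h_intS : Integrable (fun ω => Real.exp (t * (∑ i ∈ s, Y i) ω)) P :=
    hYindep.integrable_exp_mul_sum hYmeas h_int
  have hset : {ω | (n : ℝ) * (p + δ) ≤ ∑ i ∈ s, C.indicator (fun _ => (1:ℝ)) (X i ω)}
      = {ω | (n : ℝ) * (p + δ) ≤ (∑ i ∈ s, Y i) ω} := by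
    ext ω; simp [hY]
  have hchern := measure_ge_le_exp_mul_mgf (X := ∑ i ∈ s, Y i) (μ := P)
    ((n : ℝ) * (p + δ)) ht h_intS
  rw [hmgfS] at hchern
  rw [hset]
  refine hchern.trans ?_
  have hbase : Real.exp (-t * (p + δ)) * (1 - p + p * Real.exp t) ≤ Real.exp (-2 * δ ^ 2) := by
    have h1 := bernoulli_mgf_le p t hp0 hp1 ht
    calc Real.exp (-t * (p + δ)) * (1 - p + p * Real.exp t)
        = Real.exp (-(t * δ)) * (Real.exp (-(t * p)) * (1 - p + p * Real.exp t)) := by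
          rw [← mul_assoc, ← Real.exp_add]; ring_nf
      _ ≤ Real.exp (-(t * δ)) * Real.exp (t ^ 2 / 8) :=
          mul_le_mul_of_nonneg_left h1 (Real.exp_pos _).le
      _ = Real.exp (t ^ 2 / 8 - t * δ) := by rw [← Real.exp_add]; ring_nf
      _ = Real.exp (-2 * δ ^ 2) := by rw [htdef]; ring_nf
  calc Real.exp (-t * ((n : ℝ) * (p + δ))) * (1 - p + p * Real.exp t) ^ n
      = (Real.exp (-t * (p + δ)) * (1 - p + p * Real.exp t)) ^ n := by
        rw [mul_pow, ← Real.exp_nat_mul]; ring_nf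
    _ ≤ Real.exp (-2 * δ ^ 2) ^ n := by
        apply pow_le_pow_left₀ (mul_nonneg (Real.exp_pos _).le (by nlinarith [Real.exp_pos t])) hbase
    _ = Real.exp (-2 * n * δ ^ 2) := by rw [← Real.exp_nat_mul]; ring_nf

/-- **Corollary 1, average coverage of the conservative PAV
selection.** With i.i.d. samples `(X'₁,Y'₁),…,(X'ₙ,Y'ₙ),(X,Y)` of law `μ` on
`ℝ^d × ℝ`, a finite grid `G ⊆ [0,1]` with `0 ∈ G` and `|G| = K + 1` (`K ≥ 1`),
fixed measurable regions `C_τ` with `C₀` everything, `α ∈ (0,1)`, `ε ∈ (0,α)`,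
empirical frequencies `p̂(τ)` from the first `n` samples, and
`τ̂ = max{τ ∈ G : p̂(τ) ≥ 1 - (α - ε)}`: if
`n ≥ -2·log(ε/(2K(1-α+ε/2)))/ε²`, then `P((X,Y) ∈ C_τ̂) ≥ 1 - α`, the
probability being over the holdout samples and the independent test pair. -/
theorem pav_average_coverage
    {Ω : Type*} [MeasurableSpace Ω] (P : Measure Ω) [IsProbabilityMeasure P]
    (d n K : ℕ) (hn : 1 ≤ n) (hK : 1 ≤ K)
    (μ : Measure ((Fin d → ℝ) × ℝ)) [IsProbabilityMeasure μ]
    (Z : Fin (n + 1) → Ω → (Fin d → ℝ) × ℝ)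
    (hZmeas : ∀ i, Measurable (Z i))
    (hZindep : iIndepFun Z P)
    (hZlaw : ∀ i, P.map (Z i) = μ)
    (G : Finset ℝ) (hGsub : ↑G ⊆ Set.Icc (0 : ℝ) 1) (hG0 : (0 : ℝ) ∈ G)
    (hGcard : G.card = K + 1)
    (C : ℝ → Set ((Fin d → ℝ) × ℝ))
    (hCmeas : ∀ τ ∈ G, MeasurableSet (C τ))
    (hC0 : C 0 = Set.univ)
    (α ε : ℝ) (hα : α ∈ Set.Ioo (0 : ℝ) 1) (hε : ε ∈ Set.Ioo (0 : ℝ) α)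
    (phat : ℝ → Ω → ℝ)
    (hphat : phat = fun τ ω =>
      (({i : Fin n | Z i.castSucc ω ∈ C τ}).ncard : ℝ) / n)
    (τhat : Ω → ℝ)
    (hτhat : τhat = fun ω => sSup {τ : ℝ | τ ∈ G ∧ 1 - (α - ε) ≤ phat τ ω})
    (hnlarge : (-2 : ℝ) * Real.log (ε / (2 * K * (1 - α + ε / 2))) / ε ^ 2 ≤ n) :
    1 - α ≤ (P {ω | Z (Fin.last n) ω ∈ C (τhat ω)}).toReal := by
  classical
  obtain ⟨hα0, hα1⟩ := hα
  obtain ⟨hε0, hεα⟩ := hε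
  have hn0 : (0:ℝ) < n := by exact_mod_cast hn
  have hc0 : (0:ℝ) < 1 - α + ε / 2 := by linarith
  -- the first-n-coordinates map
  set V : Ω → (Fin n → (Fin d → ℝ) × ℝ) := fun ω i => Z i.castSucc ω with hV
  have hVmeas : Measurable V := measurable_pi_lambda _ fun i => hZmeas _
  -- empirical frequency as a function on the product space
  set Φ : ℝ → (Fin n → (Fin d → ℝ) × ℝ) → ℝ :=
    fun τ v => (∑ i : Fin n, (C τ).indicator (fun _ => (1:ℝ)) (v i)) / n with hΦ
  have hphat' : ∀ τ ω, phat τ ω = Φ τ (V ω) := by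
    intro τ ω
    have h1 : ({i : Fin n | Z i.castSucc ω ∈ C τ}).ncard
        = ∑ i : Fin n, if Z i.castSucc ω ∈ C τ then 1 else 0 := by
      rw [Set.ncard_eq_toFinset_card', Set.toFinset_setOf, Finset.card_filter]
    rw [hphat, hΦ]
    simp only [h1]
    congr 1
    push_cast
    exact Finset.sum_congr rfl fun i _ => by simp [Set.indicator_apply, hV]
  have hΦmeas : ∀ τ ∈ G, Measurable (Φ τ) := by
    intro τ hτ
    apply Measurable.div_const
    exact Finset.measurable_sum _ fun i _ =>
      (measurable_const.indicator (hCmeas τ hτ)).comp (measurable_pi_apply i)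
  set F : ℝ → Set (Fin n → (Fin d → ℝ) × ℝ) := fun τ => {v | 1 - (α - ε) ≤ Φ τ v} with hF
  have hFmeas : ∀ τ ∈ G, MeasurableSet (F τ) := fun τ hτ =>
    measurableSet_le measurable_const (hΦmeas τ hτ)
  set D : ℝ → Set (Fin n → (Fin d → ℝ) × ℝ) :=
    fun τ => F τ ∩ ⋂ τ' ∈ G.filter (fun τ'' => τ < τ''), (F τ')ᶜ with hD
  have hDmeas : ∀ τ ∈ G, MeasurableSet (D τ) := by
    intro τ hτ
    refine (hFmeas τ hτ).inter (MeasurableSet.biInter ((G.filter _).countable_toSet)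
      fun τ' hτ' => (hFmeas τ' (Finset.mem_filter.1 hτ').1).compl)
  -- basic facts about τhat
  have hphat0 : ∀ ω, phat 0 ω = 1 := by
    intro ω
    rw [hphat]
    simp only [hC0, Set.mem_univ, Set.setOf_true, Set.ncard_univ, Nat.card_eq_fintype_card,
      Fintype.card_fin]
    exact div_self hn0.ne'
  have hS0 : ∀ ω, (0:ℝ) ∈ {τ : ℝ | τ ∈ G ∧ 1 - (α - ε) ≤ phat τ ω} := by
    intro ω
    exact ⟨hG0, by rw [hphat0]; linarith⟩
  have hSfin : ∀ ω, ({τ : ℝ | τ ∈ G ∧ 1 - (α - ε) ≤ phat τ ω}).Finite := fun ω =>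
    G.finite_toSet.subset fun τ h => h.1
  have hτmem : ∀ ω, τhat ω ∈ {τ : ℝ | τ ∈ G ∧ 1 - (α - ε) ≤ phat τ ω} := by
    intro ω
    rw [hτhat]
    exact Set.Nonempty.csSup_mem ⟨0, hS0 ω⟩ (hSfin ω)
  have hub : ∀ ω τ', τ' ∈ {τ : ℝ | τ ∈ G ∧ 1 - (α - ε) ≤ phat τ ω} → τ' ≤ τhat ω := by
    intro ω τ' h
    rw [hτhat]
    exact le_csSup (hSfin ω).bddAbove h
  have hchar : ∀ τ ∈ G, ∀ ω, τhat ω = τ ↔ V ω ∈ D τ := by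
    intro τ hτ ω
    constructor
    · intro h
      refine ⟨?_, ?_⟩
      · show 1 - (α - ε) ≤ Φ τ (V ω)
        rw [← hphat']
        have := (hτmem ω).2
        rwa [h] at this
      · simp only [Set.mem_iInter, Set.mem_compl_iff]
        intro τ' hτ' hcon
        rcases Finset.mem_filter.1 hτ' with ⟨hτ'G, hlt⟩
        have hmem : τ' ∈ {τ : ℝ | τ ∈ G ∧ 1 - (α - ε) ≤ phat τ ω} :=
          ⟨hτ'G, by rw [hphat']; exact hcon⟩
        have := hub ω τ' hmem
        rw [h] at this
        exact absurd this (not_le.2 hlt)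
    · rintro ⟨h1, h2⟩
      have hgr : IsGreatest {τ : ℝ | τ ∈ G ∧ 1 - (α - ε) ≤ phat τ ω} τ := by
        constructor
        · exact ⟨hτ, by rw [hphat']; exact h1⟩
        · rintro τ' ⟨hτ'G, hτ'le⟩
          by_contra hcon
          push_neg at hcon
          simp only [Set.mem_iInter, Set.mem_compl_iff] at h2
          exact h2 τ' (Finset.mem_filter.2 ⟨hτ'G, hcon⟩) (by show 1 - (α - ε) ≤ Φ τ' (V ω); rw [← hphat']; exact hτ'le)
      rw [hτhat]
      exact hgr.csSup_eq
  have hAmem : ∀ ω, V ω ∈ D (τhat ω) := fun ω => (hchar (τhat ω) (hτmem ω).1 ω).1 rfl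
  have hAdisj : (↑G : Set ℝ).PairwiseDisjoint (fun τ => V ⁻¹' D τ) := by
    intro τ hτ τ' hτ' hne
    refine Set.disjoint_left.2 fun ω h h' => hne ?_
    rw [← (hchar τ (Finset.mem_coe.1 hτ) ω).2 h, ← (hchar τ' (Finset.mem_coe.1 hτ') ω).2 h']
  have hAmeas : ∀ τ ∈ G, MeasurableSet (V ⁻¹' D τ) := fun τ hτ => hVmeas (hDmeas τ hτ)
  have hAcover : (⋃ τ ∈ G, V ⁻¹' D τ) = Set.univ := by
    ext ω
    simp only [Set.mem_iUnion, Set.mem_univ, iff_true]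
    exact ⟨τhat ω, (hτmem ω).1, hAmem ω⟩
  have hsum1 : ∑ τ ∈ G, (P (V ⁻¹' D τ)).toReal = 1 := by
    have h2 : ∑ τ ∈ G, P (V ⁻¹' D τ) = 1 := by
      rw [← measure_biUnion_finset hAdisj hAmeas, hAcover, measure_univ]
    rw [← ENNReal.toReal_sum fun τ _ => measure_ne_top _ _, h2, ENNReal.toReal_one]
  -- independence of V and the test point
  set S₁ : Finset (Fin (n+1)) := Finset.univ.map ⟨Fin.castSucc, Fin.castSucc_injective n⟩ with hS₁
  have hmemS₁ : ∀ i : Fin n, i.castSucc ∈ S₁ := by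
    intro i
    simp [hS₁]
  have hlast_not : Fin.last n ∉ S₁ := by
    simp only [hS₁, Finset.mem_map, Finset.mem_univ, Function.Embedding.coeFn_mk, true_and]
    rintro ⟨i, hi⟩
    exact absurd hi (Fin.castSucc_lt_last i).ne
  have hdisj : Disjoint S₁ ({Fin.last n} : Finset (Fin (n+1))) := by
    simp [Finset.disjoint_singleton_right, hlast_not]
  have hIndepV : IndepFun V (Z (Fin.last n)) P := by
    have h := hZindep.indepFun_finset S₁ {Fin.last n} hdisj hZmeas
    have hg₁ : Measurable (fun v : S₁ → ((Fin d → ℝ) × ℝ) =>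
        (fun i : Fin n => v ⟨i.castSucc, hmemS₁ i⟩ : Fin n → (Fin d → ℝ) × ℝ)) :=
      measurable_pi_lambda _ fun i => measurable_pi_apply _
    have hg₂ : Measurable (fun v : ({Fin.last n} : Finset (Fin (n+1))) → ((Fin d → ℝ) × ℝ) =>
        v ⟨Fin.last n, Finset.mem_singleton_self _⟩) := measurable_pi_apply _
    exact h.comp hg₁ hg₂
  have hfactor : ∀ τ ∈ G, P (V ⁻¹' D τ ∩ Z (Fin.last n) ⁻¹' C τ)
      = P (V ⁻¹' D τ) * P (Z (Fin.last n) ⁻¹' C τ) := fun τ hτ =>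
    hIndepV.measure_inter_preimage_eq_mul _ _ (hDmeas τ hτ) (hCmeas τ hτ)
  have hlawi : ∀ τ ∈ G, ∀ i, (P (Z i ⁻¹' C τ)).toReal = (μ (C τ)).toReal := by
    intro τ hτ i
    rw [← hZlaw i, Measure.map_apply (hZmeas _) (hCmeas τ hτ)]
  have hlaw : ∀ τ ∈ G, P (Z (Fin.last n) ⁻¹' C τ) = μ (C τ) := by
    intro τ hτ
    rw [← hZlaw (Fin.last n), Measure.map_apply (hZmeas _) (hCmeas τ hτ)]
  -- Chernoff bound for each "bad" level
  have hεhalf : (0:ℝ) < ε / 2 := by linarith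
  have hbadbound : ∀ τ ∈ G, (μ (C τ)).toReal < 1 - α + ε / 2 →
      (P (V ⁻¹' D τ)).toReal ≤ Real.exp (-2 * n * (ε/2) ^ 2) := by
    intro τ hτ hm
    have hsub : V ⁻¹' D τ ⊆ {ω | (n:ℝ) * ((μ (C τ)).toReal + ε/2)
        ≤ ∑ i ∈ S₁, (C τ).indicator (fun _ => (1:ℝ)) (Z i ω)} := by
      intro ω hω
      have h1 : 1 - (α - ε) ≤ Φ τ (V ω) := hω.1
      have hsm : ∑ i ∈ S₁, (C τ).indicator (fun _ => (1:ℝ)) (Z i ω)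
          = ∑ i : Fin n, (C τ).indicator (fun _ => (1:ℝ)) (Z i.castSucc ω) :=
        Finset.sum_map _ _ _
      show (n:ℝ) * ((μ (C τ)).toReal + ε/2) ≤ _
      rw [hsm]
      have h2 : (1 - (α - ε)) * n ≤ ∑ i : Fin n, (C τ).indicator (fun _ => (1:ℝ)) (Z i.castSucc ω) := by
        have := (le_div_iff₀ hn0).1 h1
        exact this
      nlinarith
    have hcard : S₁.card = n := by simp [hS₁]
    have hb := chernoff_bound P Z hZmeas hZindep S₁ hcard hn (C τ) (hCmeas τ hτ)
      ((μ (C τ)).toReal) (fun i _ => hlawi τ hτ i) (ε/2) hεhalf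
    exact le_trans (ENNReal.toReal_mono (measure_ne_top _ _) (measure_mono hsub)) hb
  -- counting bad levels
  set Bad : Finset ℝ := G.filter (fun τ => ¬ (1 - α + ε / 2 ≤ (μ (C τ)).toReal)) with hBad
  have hm0 : (μ (C 0)).toReal = 1 := by rw [hC0]; simp
  have h0good : (0:ℝ) ∉ Bad := by
    simp only [hBad, Finset.mem_filter, not_and, not_not]
    intro _
    rw [hm0]
    linarith
  have hBadcard : (Bad.card : ℝ) ≤ K := by
    have hsub : Bad ⊆ G.erase 0 := fun τ hτb => Finset.mem_erase.2
      ⟨fun h => h0good (h ▸ hτb), (Finset.mem_filter.1 hτb).1⟩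
    have : Bad.card ≤ K := by
      calc Bad.card ≤ (G.erase 0).card := Finset.card_le_card hsub
        _ = K := by rw [Finset.card_erase_of_mem hG0, hGcard]; omega
    exact_mod_cast this
  -- consequence of the sample size assumption
  have hK0 : (0:ℝ) < K := by exact_mod_cast hK
  have hKexp : (K:ℝ) * Real.exp (-2 * n * (ε/2) ^ 2) ≤ ε / (2 * (1 - α + ε / 2)) := by
    have harg : (0:ℝ) < ε / (2 * K * (1 - α + ε / 2)) := by positivity
    have h1 : -2 * n * (ε/2) ^ 2 ≤ Real.log (ε / (2 * K * (1 - α + ε / 2))) := by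
      have hε2 : (0:ℝ) < ε ^ 2 := by positivity
      rw [div_le_iff₀ hε2] at hnlarge
      nlinarith
    have h2 : Real.exp (-2 * n * (ε/2) ^ 2) ≤ ε / (2 * K * (1 - α + ε / 2)) := by
      calc Real.exp (-2 * n * (ε/2) ^ 2) ≤ Real.exp (Real.log (ε / (2 * K * (1 - α + ε / 2)))) :=
            Real.exp_le_exp.2 h1
        _ = ε / (2 * K * (1 - α + ε / 2)) := Real.exp_log harg
    calc (K:ℝ) * Real.exp (-2 * n * (ε/2) ^ 2) ≤ K * (ε / (2 * K * (1 - α + ε / 2))) :=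
          mul_le_mul_of_nonneg_left h2 hK0.le
      _ = ε / (2 * (1 - α + ε / 2)) := by
          have hKne : (K:ℝ) ≠ 0 := hK0.ne'
          have hstep : ε / (2 * K * (1 - α + ε / 2)) = (ε / (2 * (1 - α + ε / 2))) / K := by
            rw [div_div]
            ring_nf
          rw [hstep, mul_div_assoc']
          exact mul_div_cancel_left₀ _ hKne
  -- main lower bound
  have key : ∑ τ ∈ G, (P (V ⁻¹' D τ)).toReal * (μ (C τ)).toReal
      ≤ (P {ω | Z (Fin.last n) ω ∈ C (τhat ω)}).toReal := by
    have hsub : (⋃ τ ∈ G, V ⁻¹' D τ ∩ Z (Fin.last n) ⁻¹' C τ)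
        ⊆ {ω | Z (Fin.last n) ω ∈ C (τhat ω)} := by
      intro ω hω
      simp only [Set.mem_iUnion] at hω
      obtain ⟨τ, hτ, h1, h2⟩ := hω
      have hττ : τhat ω = τ := (hchar τ hτ ω).2 h1
      show Z (Fin.last n) ω ∈ C (τhat ω)
      rw [hττ]
      exact h2
    have hdisj2 : (↑G : Set ℝ).PairwiseDisjoint
        (fun τ => V ⁻¹' D τ ∩ Z (Fin.last n) ⁻¹' C τ) := fun τ hτ τ' hτ' hne =>
      (hAdisj hτ hτ' hne).mono Set.inter_subset_left Set.inter_subset_left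
    have hmeas2 : ∀ τ ∈ G, MeasurableSet (V ⁻¹' D τ ∩ Z (Fin.last n) ⁻¹' C τ) := fun τ hτ =>
      (hAmeas τ hτ).inter ((hZmeas _) (hCmeas τ hτ))
    have he : P (⋃ τ ∈ G, V ⁻¹' D τ ∩ Z (Fin.last n) ⁻¹' C τ)
        = ∑ τ ∈ G, P (V ⁻¹' D τ ∩ Z (Fin.last n) ⁻¹' C τ) :=
      measure_biUnion_finset hdisj2 hmeas2
    calc ∑ τ ∈ G, (P (V ⁻¹' D τ)).toReal * (μ (C τ)).toReal
        = ∑ τ ∈ G, (P (V ⁻¹' D τ ∩ Z (Fin.last n) ⁻¹' C τ)).toReal :=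
          Finset.sum_congr rfl fun τ hτ => by
            rw [hfactor τ hτ, ENNReal.toReal_mul, hlaw τ hτ]
      _ = (P (⋃ τ ∈ G, V ⁻¹' D τ ∩ Z (Fin.last n) ⁻¹' C τ)).toReal := by
          rw [he, ENNReal.toReal_sum fun τ _ => measure_ne_top _ _]
      _ ≤ _ := ENNReal.toReal_mono (measure_ne_top _ _) (measure_mono hsub)
  -- final arithmetic
  have hsplit : ∑ τ ∈ G.filter (fun τ => 1 - α + ε / 2 ≤ (μ (C τ)).toReal),
      (P (V ⁻¹' D τ)).toReal + ∑ τ ∈ Bad, (P (V ⁻¹' D τ)).toReal = 1 := by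
    rw [hBad, Finset.sum_filter_add_sum_filter_not, hsum1]
  have hBadsum : ∑ τ ∈ Bad, (P (V ⁻¹' D τ)).toReal ≤ ε / (2 * (1 - α + ε / 2)) := by
    calc ∑ τ ∈ Bad, (P (V ⁻¹' D τ)).toReal
        ≤ ∑ _τ ∈ Bad, Real.exp (-2 * n * (ε/2) ^ 2) := by
          refine Finset.sum_le_sum fun τ hτ => ?_
          rcases Finset.mem_filter.1 hτ with ⟨hτG, hτb⟩
          exact hbadbound τ hτG (by push_neg at hτb; exact hτb)
      _ = Bad.card * Real.exp (-2 * n * (ε/2) ^ 2) := by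
          rw [Finset.sum_const, nsmul_eq_mul]
      _ ≤ K * Real.exp (-2 * n * (ε/2) ^ 2) :=
          mul_le_mul_of_nonneg_right hBadcard (Real.exp_pos _).le
      _ ≤ ε / (2 * (1 - α + ε / 2)) := hKexp
  have hGoodsum : (1:ℝ) - ε / (2 * (1 - α + ε / 2))
      ≤ ∑ τ ∈ G.filter (fun τ => 1 - α + ε / 2 ≤ (μ (C τ)).toReal), (P (V ⁻¹' D τ)).toReal := by
    linarith
  have hfinal : 1 - α ≤ ∑ τ ∈ G, (P (V ⁻¹' D τ)).toReal * (μ (C τ)).toReal := by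
    have h1 : ∑ τ ∈ G.filter (fun τ => 1 - α + ε / 2 ≤ (μ (C τ)).toReal),
        (P (V ⁻¹' D τ)).toReal * (μ (C τ)).toReal
        ≤ ∑ τ ∈ G, (P (V ⁻¹' D τ)).toReal * (μ (C τ)).toReal :=
      Finset.sum_le_sum_of_subset_of_nonneg (Finset.filter_subset _ _)
        (fun τ _ _ => mul_nonneg ENNReal.toReal_nonneg ENNReal.toReal_nonneg)
    have h2 : ∑ τ ∈ G.filter (fun τ => 1 - α + ε / 2 ≤ (μ (C τ)).toReal),
        (P (V ⁻¹' D τ)).toReal * (1 - α + ε / 2)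
        ≤ ∑ τ ∈ G.filter (fun τ => 1 - α + ε / 2 ≤ (μ (C τ)).toReal),
        (P (V ⁻¹' D τ)).toReal * (μ (C τ)).toReal := by
      refine Finset.sum_le_sum fun τ hτ => ?_
      exact mul_le_mul_of_nonneg_left (Finset.mem_filter.1 hτ).2 ENNReal.toReal_nonneg
    have h3 : ∑ τ ∈ G.filter (fun τ => 1 - α + ε / 2 ≤ (μ (C τ)).toReal),
        (P (V ⁻¹' D τ)).toReal * (1 - α + ε / 2)
        = (1 - α + ε / 2) * ∑ τ ∈ G.filter (fun τ => 1 - α + ε / 2 ≤ (μ (C τ)).toReal),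
        (P (V ⁻¹' D τ)).toReal := by
      rw [← Finset.sum_mul, mul_comm]
    have h5 : (1 - α + ε / 2) * (1 - ε / (2 * (1 - α + ε / 2)))
        ≤ (1 - α + ε / 2) * ∑ τ ∈ G.filter (fun τ => 1 - α + ε / 2 ≤ (μ (C τ)).toReal),
        (P (V ⁻¹' D τ)).toReal :=
      mul_le_mul_of_nonneg_left hGoodsum hc0.le
    have h6 : (1 - α + ε / 2) * (1 - ε / (2 * (1 - α + ε / 2))) = 1 - α := by
      have hcne : (1 - α + ε / 2) ≠ 0 := hc0.ne'
      have h7 : (1 - α + ε / 2) * (ε / (2 * (1 - α + ε / 2))) = ε / 2 := by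
        calc (1 - α + ε / 2) * (ε / (2 * (1 - α + ε / 2)))
            = ε * ((1 - α + ε / 2) / (2 * (1 - α + ε / 2))) := by ring
          _ = ε * (1 / 2) := by
              rw [mul_comm 2 (1 - α + ε / 2), ← div_div, div_self hcne]
          _ = ε / 2 := by ring
      rw [mul_one_sub, h7]
      ring
    linarith
  linarith
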